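/- Let k ≥ 3 be an integer. Suppose (i) for all n with 1 ≤ n ≤ 2^{k+1}, λ_n ≤ log₂ n with equality if and only if n is a power of 2; (ii) λ_n < log₂(n−1) for all n with 2^k + 2 ≤ n ≤ 2^{k+1} − 1; (iii) λ_{2^d−1} < log₂(2^d − 2) for all integers d ≥ 5; and (iv) λ_{2^d+1} < log₂(2^d + 1/2) for all integers d ≥ 3. Then for every integer n ≥ 1, λ_n ≤ log₂ n with equality if and only if n is a power of 2. -/

import Mathlib

/-- The bricklayer's graph `G_n`: vertices `0, …, n-1`, adjacent iff their binary
expansions differ in exactly one bit (i.e. their XOR is a power of two). -/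
def bricklayerGraph (n : ℕ) : SimpleGraph (Fin n) where
  Adj u v := ∃ k : ℕ, (u.val ^^^ v.val) = 2 ^ k
  symm := by
    refine ⟨?_⟩
    rintro u v ⟨k, h⟩
    exact ⟨k, by rwa [Nat.xor_comm]⟩
  loopless := by
    refine ⟨?_⟩
    rintro u ⟨k, h⟩
    rw [Nat.xor_self] at h
    exact (pow_ne_zero k (two_ne_zero)) h.symm

noncomputable instance (n : ℕ) : DecidableRel (bricklayerGraph n).Adj :=
  Classical.decRel _

/-- `λ_n`: the principal (largest) eigenvalue of the adjacency matrix of `G_n` over ℝ. -/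
noncomputable def bricklayerLambda (n : ℕ) : ℝ :=
  sSup (spectrum ℝ ((bricklayerGraph n).adjMatrix ℝ))


section Spectral
open Matrix
variable {N : ℕ} {A : Matrix (Fin N) (Fin N) ℝ}

lemma BL.spec_eq (hA : A.IsHermitian) : spectrum ℝ A = Set.range hA.eigenvalues :=
  hA.spectrum_real_eq_range_eigenvalues

lemma BL.bddAbove (hA : A.IsHermitian) : BddAbove (spectrum ℝ A) := by
  rw [BL.spec_eq hA]; exact (Set.finite_range _).bddAbove

lemma BL.eig_le (hA : A.IsHermitian) (i : Fin N) :
    hA.eigenvalues i ≤ sSup (spectrum ℝ A) :=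
  le_csSup (BL.bddAbove hA) (by rw [BL.spec_eq hA]; exact Set.mem_range_self i)

lemma BL.mem_le (hA : A.IsHermitian) {μ : ℝ} (hμ : μ ∈ spectrum ℝ A) :
    μ ≤ sSup (spectrum ℝ A) :=
  le_csSup (BL.bddAbove hA) hμ

lemma BL.exists_eig (hA : A.IsHermitian) (hN : 0 < N) :
    ∃ i : Fin N, hA.eigenvalues i = sSup (spectrum ℝ A) := by
  obtain ⟨i, -, hi⟩ := Finset.exists_max_image Finset.univ hA.eigenvalues ⟨⟨0, hN⟩, Finset.mem_univ _⟩
  refine ⟨i, le_antisymm (BL.eig_le hA i) ?_⟩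
  apply csSup_le
  · rw [BL.spec_eq hA]; exact ⟨_, Set.mem_range_self (⟨0, hN⟩ : Fin N)⟩
  · rw [BL.spec_eq hA]; rintro x ⟨j, rfl⟩; exact hi j (Finset.mem_univ _)

lemma BL.exists_eigvec (hA : A.IsHermitian) (hN : 0 < N) :
    ∃ v : Fin N → ℝ, v ≠ 0 ∧ A *ᵥ v = sSup (spectrum ℝ A) • v := by
  obtain ⟨i, hi⟩ := BL.exists_eig hA hN
  refine ⟨⇑(hA.eigenvectorBasis i), ?_, by rw [hA.mulVec_eigenvectorBasis, hi]⟩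
  intro h
  exact hA.eigenvectorBasis.orthonormal.ne_zero i (by ext j; exact congrFun h j)

lemma BL.rayleigh (hA : A.IsHermitian) (x : Fin N → ℝ) :
    x ⬝ᵥ (A *ᵥ x) ≤ sSup (spectrum ℝ A) * (x ⬝ᵥ x) := by
  rcases Nat.eq_zero_or_pos N with h0 | hN
  · subst h0; simp [dotProduct]
  set M := sSup (spectrum ℝ A) with hM
  set V : Matrix (Fin N) (Fin N) ℝ := (hA.eigenvectorUnitary : Matrix (Fin N) (Fin N) ℝ) with hV
  have hVV : V * star V = 1 := (Matrix.mem_unitaryGroup_iff).mp hA.eigenvectorUnitary.2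
  have hstar : star V = Vᵀ := by
    rw [Matrix.star_eq_conjTranspose, Matrix.conjTranspose_eq_transpose_of_trivial]
  set y : Fin N → ℝ := Vᵀ *ᵥ x with hy
  have key : ∀ (D : Matrix (Fin N) (Fin N) ℝ),
      x ⬝ᵥ ((V * D * star V) *ᵥ x) = y ⬝ᵥ (D *ᵥ y) := by
    intro D
    rw [← Matrix.mulVec_mulVec, ← Matrix.mulVec_mulVec, Matrix.dotProduct_mulVec,
      ← Matrix.mulVec_transpose, hstar]
  have hd : (RCLike.ofReal ∘ hA.eigenvalues : Fin N → ℝ) = hA.eigenvalues := rfl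
  have hAx : x ⬝ᵥ (A *ᵥ x) = y ⬝ᵥ ((Matrix.diagonal hA.eigenvalues) *ᵥ y) := by
    conv_lhs => rw [hA.spectral_theorem, Unitary.conjStarAlgAut_apply, ← hV]
    rw [key, hd]
  have hxx : x ⬝ᵥ x = y ⬝ᵥ y := by
    have := key 1
    rw [mul_one, hVV, Matrix.one_mulVec, Matrix.one_mulVec] at this
    exact this
  rw [hAx, hxx]
  have : ∀ i, y i * ((Matrix.diagonal hA.eigenvalues) *ᵥ y) i ≤ M * (y i * y i) := by
    intro i
    rw [Matrix.mulVec_diagonal]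
    have h1 : hA.eigenvalues i ≤ M := BL.eig_le hA i
    have h2 : (0:ℝ) ≤ y i * y i := mul_self_nonneg _
    nlinarith [mul_self_nonneg (y i)]
  calc y ⬝ᵥ ((Matrix.diagonal hA.eigenvalues) *ᵥ y) ≤ ∑ i, M * (y i * y i) :=
        Finset.sum_le_sum fun i _ => this i
    _ = M * (y ⬝ᵥ y) := by rw [dotProduct, Finset.mul_sum]

end Spectral


section Double
open Matrix

def BL.e (n : ℕ) : Fin n × Fin 2 ≃ Fin (2 * n) :=
  finProdFinEquiv.trans (finCongr (mul_comm n 2))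

lemma BL.e_val {n : ℕ} (p : Fin n × Fin 2) : (BL.e n p).val = p.2.val + 2 * p.1.val := rfl

lemma BL.xor00 (a a' : ℕ) : (2*a) ^^^ (2*a') = 2*(a^^^a') := by
  simpa [Nat.bit] using Nat.xor_bit false a false a'

lemma BL.xor11 (a a' : ℕ) : (2*a+1) ^^^ (2*a'+1) = 2*(a^^^a') := by
  simpa [Nat.bit] using Nat.xor_bit true a true a'

lemma BL.xor01 (a a' : ℕ) : (2*a) ^^^ (2*a'+1) = 2*(a^^^a')+1 := by
  simpa [Nat.bit] using Nat.xor_bit false a true a'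

lemma BL.xor10 (a a' : ℕ) : (2*a+1) ^^^ (2*a') = 2*(a^^^a')+1 := by
  simpa [Nat.bit] using Nat.xor_bit true a false a'

lemma BL.pow2_even_iff (x : ℕ) : (∃ k, 2*x = 2^k) ↔ (∃ k, x = 2^k) := by
  constructor
  · rintro ⟨k, hk⟩
    cases k with
    | zero => simp at hk
    | succ i => rw [pow_succ] at hk; exact ⟨i, by omega⟩
  · rintro ⟨i, rfl⟩; exact ⟨i+1, by rw [pow_succ]; ring⟩

lemma BL.pow2_odd_iff (x : ℕ) : (∃ k, 2*x + 1 = 2^k) ↔ x = 0 := by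
  constructor
  · rintro ⟨k, hk⟩
    cases k with
    | zero => simp at hk; omega
    | succ i => rw [pow_succ] at hk; omega
  · rintro rfl; exact ⟨0, by norm_num⟩

lemma BL.adj_pair {n : ℕ} (p q : Fin n × Fin 2) :
    (bricklayerGraph (2*n)).Adj (BL.e n p) (BL.e n q) ↔
      (p.2 = q.2 ∧ (bricklayerGraph n).Adj p.1 q.1) ∨ (p.1 = q.1 ∧ p.2 ≠ q.2) := by
  obtain ⟨a, b⟩ := p; obtain ⟨a', b'⟩ := q
  show (∃ k, ((BL.e n (a,b)).val ^^^ (BL.e n (a',b')).val) = 2^k) ↔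
    (b = b' ∧ ∃ k, (a.val ^^^ a'.val) = 2^k) ∨ (a = a' ∧ b ≠ b')
  rw [BL.e_val, BL.e_val]
  have hext : (a = a') ↔ (a.val = a'.val) := Fin.ext_iff
  fin_cases b <;> fin_cases b' <;>
    simp only [Fin.isValue, Fin.val_zero, Fin.val_one, zero_add, Nat.add_comm 1] <;>
    simp [BL.xor00, BL.xor01, BL.xor10, BL.xor11, BL.pow2_even_iff, BL.pow2_odd_iff,
      xor_eq_zero_iff, Fin.ext_iff]


lemma BL.fin2_ne : ∀ b : Fin 2, b ≠ 1 - b := by decide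

lemma BL.fin2_other : ∀ {b b' : Fin 2}, b ≠ b' → b' = 1 - b := by decide

lemma BL.entry_split {n : ℕ} (p q : Fin n × Fin 2) :
    ((bricklayerGraph (2*n)).adjMatrix ℝ) (BL.e n p) (BL.e n q)
      = (if p.2 = q.2 then ((bricklayerGraph n).adjMatrix ℝ) p.1 q.1 else 0)
        + (if q = (p.1, 1 - p.2) then 1 else 0) := by
  rw [SimpleGraph.adjMatrix_apply, SimpleGraph.adjMatrix_apply]
  by_cases hb : p.2 = q.2
  · have hne : ¬ (q = (p.1, 1 - p.2)) := by
      intro h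
      exact BL.fin2_ne p.2 (hb.trans (congrArg Prod.snd h))
    rw [if_pos hb, if_neg hne, add_zero]
    by_cases hadj : (bricklayerGraph n).Adj p.1 q.1
    · rw [if_pos ((BL.adj_pair p q).mpr (Or.inl ⟨hb, hadj⟩)), if_pos hadj]
    · have hne2 : ¬ (bricklayerGraph (2*n)).Adj (BL.e n p) (BL.e n q) := by
        intro h
        rcases (BL.adj_pair p q).mp h with ⟨-, h2⟩ | ⟨-, h2⟩
        · exact hadj h2
        · exact h2 hb
      rw [if_neg hne2, if_neg hadj]
  · rw [if_neg hb, zero_add]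
    by_cases ha : p.1 = q.1
    · have hq : q = (p.1, 1 - p.2) := by
        rw [Prod.ext_iff]
        exact ⟨ha.symm, BL.fin2_other hb⟩
      rw [if_pos ((BL.adj_pair p q).mpr (Or.inr ⟨ha, hb⟩)), if_pos hq]
    · have hq : ¬ (q = (p.1, 1 - p.2)) := by
        intro h
        exact ha (by rw [h])
      have hne2 : ¬ (bricklayerGraph (2*n)).Adj (BL.e n p) (BL.e n q) := by
        intro h
        rcases (BL.adj_pair p q).mp h with ⟨h1, -⟩ | ⟨h1, -⟩
        · exact hb h1
        · exact ha h1
      rw [if_neg hne2, if_neg hq]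

lemma BL.mulVec_pair {n : ℕ} (y : Fin (2*n) → ℝ) (p : Fin n × Fin 2) :
    ((bricklayerGraph (2*n)).adjMatrix ℝ *ᵥ y) (BL.e n p) =
      ((bricklayerGraph n).adjMatrix ℝ *ᵥ (fun a => y (BL.e n (a, p.2)))) p.1
        + y (BL.e n (p.1, 1 - p.2)) := by
  show (fun u => ((bricklayerGraph (2*n)).adjMatrix ℝ) (BL.e n p) u) ⬝ᵥ y = _
  rw [dotProduct, ← Equiv.sum_comp (BL.e n)
    (fun u => ((bricklayerGraph (2*n)).adjMatrix ℝ) (BL.e n p) u * y u)]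
  simp only [BL.entry_split, add_mul]
  rw [Finset.sum_add_distrib]
  congr 1
  · rw [Fintype.sum_prod_type]
    simp only [ite_mul, zero_mul, Finset.sum_ite_eq, Finset.mem_univ, if_true]
    rfl
  · simp only [ite_mul, zero_mul, one_mul, Finset.sum_ite_eq', Finset.mem_univ, if_true]


end Double

section Graph
open Matrix

lemma BL.mem_spectrum_of_eigvec {N : ℕ} {A : Matrix (Fin N) (Fin N) ℝ} {μ : ℝ} {v : Fin N → ℝ}
    (hv : v ≠ 0) (h : A *ᵥ v = μ • v) : μ ∈ spectrum ℝ A := by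
  rw [← AlgEquiv.spectrum_eq (Matrix.toLinAlgEquiv' : Matrix (Fin N) (Fin N) ℝ ≃ₐ[ℝ] _) A,
    ← Module.End.hasEigenvalue_iff_mem_spectrum]
  exact Module.End.hasEigenvalue_of_hasEigenvector
    ⟨Module.End.mem_eigenspace_iff.mpr (by rw [Matrix.toLinAlgEquiv'_apply]; exact h), hv⟩

lemma BL.herm (n : ℕ) : ((bricklayerGraph n).adjMatrix ℝ).IsHermitian := by
  ext i j
  simp [Matrix.conjTranspose_apply, SimpleGraph.adjMatrix_apply, SimpleGraph.adj_comm]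

lemma BL.dot_self_pos {N : ℕ} {v : Fin N → ℝ} (hv : v ≠ 0) : 0 < v ⬝ᵥ v := by
  have h1 : (0:ℝ) ≤ v ⬝ᵥ v := Finset.sum_nonneg fun i _ => mul_self_nonneg _
  rcases h1.lt_or_eq with h | h
  · exact h
  · exact absurd ((dotProduct_self_eq_zero).mp h.symm) hv

lemma BL.sum_ext {n m : ℕ} (h : n ≤ m) (f : Fin m → ℝ)
    (hf : ∀ u : Fin m, ¬ (u.val < n) → f u = 0) :
    ∑ u : Fin m, f u = ∑ u : Fin n, f (Fin.castLE h u) := by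
  have : ∑ u : Fin n, f (Fin.castLE h u) = ∑ u ∈ Finset.univ.map (Fin.castLEEmb h), f u := by
    rw [Finset.sum_map]
    rfl
  rw [this]
  symm
  apply Finset.sum_subset (Finset.subset_univ _)
  intro x _ hx
  apply hf
  intro hlt
  exact hx (Finset.mem_map.mpr ⟨⟨x.val, hlt⟩, Finset.mem_univ _, rfl⟩)

lemma BL.lam_eigvec (n : ℕ) (hn : 0 < n) :
    ∃ v : Fin n → ℝ, v ≠ 0 ∧ (bricklayerGraph n).adjMatrix ℝ *ᵥ v = bricklayerLambda n • v :=
  BL.exists_eigvec (BL.herm n) hn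

lemma BL.lam_rayleigh (n : ℕ) (x : Fin n → ℝ) :
    x ⬝ᵥ ((bricklayerGraph n).adjMatrix ℝ *ᵥ x) ≤ bricklayerLambda n * (x ⬝ᵥ x) :=
  BL.rayleigh (BL.herm n) x

lemma BL.mono {n m : ℕ} (hn : 0 < n) (h : n ≤ m) :
    bricklayerLambda n ≤ bricklayerLambda m := by
  obtain ⟨v, hv0, hv⟩ := BL.lam_eigvec n hn
  classical
  set w : Fin m → ℝ := fun u => if h' : u.val < n then v ⟨u.val, h'⟩ else 0 with hw
  have hwcast : ∀ u : Fin n, w (Fin.castLE h u) = v u := by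
    intro u
    show (if h' : (Fin.castLE h u).val < n then v ⟨(Fin.castLE h u).val, h'⟩ else 0) = v u
    rw [dif_pos (show (Fin.castLE h u).val < n from u.isLt)]
    rfl
  have hzero : ∀ u : Fin m, ¬ u.val < n → w u = 0 := fun u hu => dif_neg hu
  have hA : ∀ (a b : Fin n),
      (bricklayerGraph m).adjMatrix ℝ (Fin.castLE h a) (Fin.castLE h b)
        = (bricklayerGraph n).adjMatrix ℝ a b := by
    intro a b
    rw [SimpleGraph.adjMatrix_apply, SimpleGraph.adjMatrix_apply]
    exact if_congr Iff.rfl rfl rfl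
  have hww : w ⬝ᵥ w = v ⬝ᵥ v := by
    rw [dotProduct, dotProduct, BL.sum_ext h _ (fun u hu => by rw [hzero u hu, zero_mul])]
    exact Finset.sum_congr rfl fun u _ => by rw [hwcast]
  have hq : w ⬝ᵥ ((bricklayerGraph m).adjMatrix ℝ *ᵥ w)
      = v ⬝ᵥ ((bricklayerGraph n).adjMatrix ℝ *ᵥ v) := by
    rw [dotProduct, dotProduct, BL.sum_ext h _ (fun u hu => by rw [hzero u hu, zero_mul])]
    refine Finset.sum_congr rfl fun u _ => ?_
    rw [hwcast]
    congr 1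
    show (fun b => (bricklayerGraph m).adjMatrix ℝ (Fin.castLE h u) b) ⬝ᵥ w = _
    rw [dotProduct, BL.sum_ext h _ (fun b hb => by rw [hzero b hb, mul_zero])]
    exact Finset.sum_congr rfl fun b _ => by rw [hwcast, hA]
  have h1 : bricklayerLambda n * (v ⬝ᵥ v) = v ⬝ᵥ ((bricklayerGraph n).adjMatrix ℝ *ᵥ v) := by
    rw [hv, dotProduct_smul, smul_eq_mul]
  have h2 := BL.lam_rayleigh m w
  rw [hq, hww, ← h1] at h2
  exact le_of_mul_le_mul_right h2 (BL.dot_self_pos hv0)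

end Graph

section DoubleMain
open Matrix

lemma BL.double_ge {n : ℕ} (hn : 0 < n) :
    bricklayerLambda n + 1 ≤ bricklayerLambda (2*n) := by
  obtain ⟨v, hv0, hv⟩ := BL.lam_eigvec n hn
  set y : Fin (2*n) → ℝ := fun u => v ((BL.e n).symm u).1 with hy
  have hyev : ∀ p : Fin n × Fin 2, y (BL.e n p) = v p.1 := by
    intro p; simp [hy]
  have key : (bricklayerGraph (2*n)).adjMatrix ℝ *ᵥ y = (bricklayerLambda n + 1) • y := by
    funext u
    obtain ⟨p, rfl⟩ := (BL.e n).surjective u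
    rw [BL.mulVec_pair, Pi.smul_apply, hyev, hyev, smul_eq_mul]
    have hv' : (fun a => y (BL.e n (a, p.2))) = v := funext fun a => hyev (a, p.2)
    rw [hv', hv, Pi.smul_apply, smul_eq_mul]
    ring
  have hy0 : y ≠ 0 := by
    intro h
    apply hv0
    funext i
    have h2 := congrFun h (BL.e n (i, 0))
    rw [hyev] at h2
    exact h2
  exact BL.mem_le (BL.herm (2*n)) (BL.mem_spectrum_of_eigvec hy0 key)

lemma BL.double_le {n : ℕ} (hn : 0 < n) :
    bricklayerLambda (2*n) ≤ bricklayerLambda n + 1 := by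
  obtain ⟨y, hy0, hy⟩ := BL.lam_eigvec (2*n) (by omega)
  set x0 : Fin n → ℝ := fun a => y (BL.e n (a, 0)) with hx0
  set x1 : Fin n → ℝ := fun a => y (BL.e n (a, 1)) with hx1
  have h10 : (1 - (0:Fin 2)) = 1 := rfl
  have h11 : (1 - (1:Fin 2)) = 0 := rfl
  have hyy : y ⬝ᵥ y = x0 ⬝ᵥ x0 + x1 ⬝ᵥ x1 := by
    rw [dotProduct, ← Equiv.sum_comp (BL.e n) (fun u => y u * y u), Fintype.sum_prod_type]
    simp only [Fin.sum_univ_two, dotProduct, hx0, hx1]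
    rw [← Finset.sum_add_distrib]
  have hquad : y ⬝ᵥ ((bricklayerGraph (2*n)).adjMatrix ℝ *ᵥ y)
      = x0 ⬝ᵥ ((bricklayerGraph n).adjMatrix ℝ *ᵥ x0)
        + x1 ⬝ᵥ ((bricklayerGraph n).adjMatrix ℝ *ᵥ x1) + 2 * (x0 ⬝ᵥ x1) := by
    rw [dotProduct, ← Equiv.sum_comp (BL.e n)
      (fun u => y u * ((bricklayerGraph (2*n)).adjMatrix ℝ *ᵥ y) u), Fintype.sum_prod_type]
    simp only [BL.mulVec_pair, h10, h11, Fin.sum_univ_two]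
    rw [dotProduct, dotProduct, dotProduct, Finset.mul_sum,
      ← Finset.sum_add_distrib, ← Finset.sum_add_distrib]
    exact Finset.sum_congr rfl fun a _ => by simp only [hx0, hx1]; ring
  have hray0 := BL.lam_rayleigh n x0
  have hray1 := BL.lam_rayleigh n x1
  have hcs : 2 * (x0 ⬝ᵥ x1) ≤ x0 ⬝ᵥ x0 + x1 ⬝ᵥ x1 := by
    rw [dotProduct, dotProduct, dotProduct, Finset.mul_sum, ← Finset.sum_add_distrib]
    exact Finset.sum_le_sum fun a _ => by nlinarith [sq_nonneg (x0 a - x1 a)]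
  have hqv : y ⬝ᵥ ((bricklayerGraph (2*n)).adjMatrix ℝ *ᵥ y)
      = bricklayerLambda (2*n) * (y ⬝ᵥ y) := by
    rw [hy, dotProduct_smul, smul_eq_mul]
  have hypos : 0 < y ⬝ᵥ y := BL.dot_self_pos hy0
  have hfinal : bricklayerLambda (2*n) * (y ⬝ᵥ y) ≤ (bricklayerLambda n + 1) * (y ⬝ᵥ y) := by
    rw [← hqv, hquad, hyy]
    nlinarith [hray0, hray1, hcs]
  exact le_of_mul_le_mul_right hfinal hypos

lemma BL.double {n : ℕ} (hn : 0 < n) :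
    bricklayerLambda (2*n) = bricklayerLambda n + 1 :=
  le_antisymm (BL.double_le hn) (BL.double_ge hn)

end DoubleMain

section Arith

lemma BL.logb_double {x : ℝ} (hx : 0 < x) : Real.logb 2 (2*x) = Real.logb 2 x + 1 := by
  rw [Real.logb_mul (by norm_num) hx.ne', Real.logb_self_eq_one (by norm_num)]
  ring

lemma BL.logb_pow2 (d : ℕ) : Real.logb 2 ((2:ℝ)^d) = d := by
  rw [Real.logb_pow, Real.logb_self_eq_one (by norm_num), mul_one]

lemma BL.lam_pow2 (h0 : bricklayerLambda 1 = 0) (d : ℕ) : bricklayerLambda (2^d) = d := by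
  induction d with
  | zero => simpa using h0
  | succ i ih =>
      have h2 : (2:ℕ)^(i+1) = 2 * 2^i := by ring
      rw [h2, BL.double (Nat.one_le_pow _ _ (by norm_num)), ih]
      push_cast
      ring

end Arith

/-- The staircase lemma: the four hypotheses for some `k ≥ 3` imply the main theorem. -/
theorem bricklayer_staircase (k : ℕ) (hk : 3 ≤ k)
    (h1 : ∀ n : ℕ, 1 ≤ n → n ≤ 2 ^ (k + 1) →
      bricklayerLambda n ≤ Real.logb 2 n ∧
        (bricklayerLambda n = Real.logb 2 n ↔ ∃ d : ℕ, n = 2 ^ d))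
    (h2 : ∀ n : ℕ, 2 ^ k + 2 ≤ n → n ≤ 2 ^ (k + 1) - 1 →
      bricklayerLambda n < Real.logb 2 ((n : ℝ) - 1))
    (h3 : ∀ d : ℕ, 5 ≤ d →
      bricklayerLambda (2 ^ d - 1) < Real.logb 2 ((2 : ℝ) ^ d - 2))
    (h4 : ∀ d : ℕ, 3 ≤ d →
      bricklayerLambda (2 ^ d + 1) < Real.logb 2 ((2 : ℝ) ^ d + 1 / 2)) :
    ∀ n : ℕ, 1 ≤ n →
      bricklayerLambda n ≤ Real.logb 2 n ∧
        (bricklayerLambda n = Real.logb 2 n ↔ ∃ d : ℕ, n = 2 ^ d) := by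
  have hpow_le : ∀ {a b : ℕ}, 2^a ≤ 2^b → a ≤ b := by
    intro a b hab
    by_contra hc
    have hba : 2^(b+1) ≤ 2^a := Nat.pow_le_pow_right (by norm_num) (by omega)
    have hb1 : (2:ℕ)^(b+1) = 2*2^b := by ring
    have hbp : (1:ℕ) ≤ 2^b := Nat.one_le_pow _ _ (by norm_num)
    omega
  have hk8 : (8:ℕ) ≤ 2^k := by
    calc (8:ℕ) = 2^3 := by norm_num
      _ ≤ 2^k := Nat.pow_le_pow_right (by norm_num) hk
  have h1pos : (1:ℕ) ≤ 2^(k+1) := Nat.one_le_pow _ _ (by norm_num)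
  have h0 : bricklayerLambda 1 = 0 := by
    have := (h1 1 le_rfl h1pos).2.mpr ⟨0, rfl⟩
    simpa using this
  have hcast : ∀ d : ℕ, ((2^d : ℕ) : ℝ) = (2:ℝ)^d := by intro d; push_cast; ring
  have hlogpow : ∀ d : ℕ, Real.logb 2 ((2^d : ℕ) : ℝ) = d := by
    intro d; rw [hcast, BL.logb_pow2]
  suffices H : ∀ n : ℕ,
      (1 ≤ n → (bricklayerLambda n ≤ Real.logb 2 n ∧
        (bricklayerLambda n = Real.logb 2 n ↔ ∃ d : ℕ, n = 2 ^ d))) ∧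
      (2^k + 1 ≤ n → ((∃ d, n = 2^d) ∨ (∃ d, n = 2^d + 1) ∨
        bricklayerLambda n < Real.logb 2 ((n:ℝ) - 1))) by
    exact fun n hn => (H n).1 hn
  intro n
  induction n using Nat.strong_induction_on with
  | _ n IH =>
  have hk1 : (2:ℕ)^(k+1) = 2*2^k := by ring
  by_cases hn0 : n = 0
  · exact ⟨fun h => absurd h (by omega), fun h => absurd h (by omega)⟩
  have hRn : 2^k + 1 ≤ n → ((∃ d, n = 2^d) ∨ (∃ d, n = 2^d + 1) ∨
      bricklayerLambda n < Real.logb 2 ((n:ℝ) - 1)) := by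
    intro hnk
    by_cases hpow : ∃ d, n = 2^d
    · exact Or.inl hpow
    by_cases hpow1 : ∃ d, n = 2^d + 1
    · exact Or.inr (Or.inl hpow1)
    refine Or.inr (Or.inr ?_)
    by_cases hsmall : n ≤ 2^(k+1)
    · have hlb : 2^k + 2 ≤ n := by
        rcases Nat.eq_or_lt_of_le hnk with he | hlt
        · exact absurd ⟨k, he.symm⟩ hpow1
        · omega
      have hub : n ≤ 2^(k+1) - 1 := by
        rcases Nat.eq_or_lt_of_le hsmall with he | hlt
        · exact absurd ⟨k+1, he⟩ hpow
        · omega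
      exact h2 n hlb hub
    · push_neg at hsmall
      rcases Nat.even_or_odd n with he | ho
      · obtain ⟨m, hm⟩ := he
        have hm2 : n = 2 * m := by omega
        have hmk : 2^k + 1 ≤ m := by omega
        have hmpos : 0 < m := by omega
        have hdb : bricklayerLambda n = bricklayerLambda m + 1 := by
          rw [hm2]; exact BL.double hmpos
        rcases (IH m (by omega)).2 hmk with ⟨d, hd⟩ | ⟨d, hd⟩ | hlt
        · exact absurd ⟨d+1, by rw [hm2, hd]; ring⟩ hpow
        · have hd3 : 3 ≤ d := by
            have hdd : 2^k ≤ 2^d := by omega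
            have := hpow_le hdd
            omega
          have hlam := h4 d hd3
          rw [← hd] at hlam
          have hnm : (n:ℝ) = 2 * (m:ℝ) := by rw [hm2]; push_cast; ring
          have hcast2 : ((n:ℝ) - 1) = 2 * ((2:ℝ)^d + 1/2) := by
            rw [hnm, hd]; push_cast; ring
          rw [hdb, hcast2, BL.logb_double (show (0:ℝ) < (2:ℝ)^d + 1/2 by positivity)]
          linarith
        · have hm1 : (2:ℝ) ≤ (m:ℝ) := by exact_mod_cast (show (2:ℕ) ≤ m by omega)
          have h2m : ((n:ℝ) - 1) = 2*(m:ℝ) - 1 := by rw [hm2]; push_cast; ring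
          rw [hdb, h2m]
          have hstep : Real.logb 2 (2*((m:ℝ)-1)) = Real.logb 2 ((m:ℝ) - 1) + 1 :=
            BL.logb_double (by linarith)
          have hmono : Real.logb 2 (2*((m:ℝ)-1)) ≤ Real.logb 2 (2*(m:ℝ) - 1) :=
            Real.logb_le_logb_of_le (by norm_num) (by linarith) (by linarith)
          linarith
      · obtain ⟨m, hm⟩ := ho
        have hmk : 2^k ≤ m := by omega
        have hmono := BL.mono (show 0 < n by omega) (show n ≤ 2*(m+1) by omega)
        have hdb : bricklayerLambda (2*(m+1)) = bricklayerLambda (m+1) + 1 :=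
          BL.double (by omega)
        by_cases hq : ∃ d, m + 1 = 2^d
        · obtain ⟨d, hd⟩ := hq
          have hdk : k + 1 ≤ d := by
            by_contra hc
            have : 2^d ≤ 2^k := Nat.pow_le_pow_right (by norm_num) (by omega)
            omega
          have h2d1 : (2:ℕ)^(d+1) = 2*2^d := by ring
          have hne : n = 2^(d+1) - 1 := by omega
          have hlam := h3 (d+1) (by omega)
          rw [← hne] at hlam
          have hmr : ((m:ℝ)) + 1 = (2:ℝ)^d := by
            exact_mod_cast congrArg (Nat.cast : ℕ → ℝ) hd
          have hnr : (n:ℝ) = 2*(m:ℝ)+1 := by rw [hm]; push_cast; ring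
          have hgoal : ((n:ℝ) - 1) = (2:ℝ)^(d+1) - 2 := by
            rw [hnr, pow_succ]; linarith
          rw [hgoal]
          exact hlam
        · by_cases hq1 : ∃ d, m + 1 = 2^d + 1
          · obtain ⟨d, hd⟩ := hq1
            refine absurd ⟨d+1, ?_⟩ hpow1
            have h2d1 : (2:ℕ)^(d+1) = 2*2^d := by ring
            omega
          · rcases (IH (m+1) (by omega)).2 (by omega) with h' | h' | hlt
            · exact absurd h' hq
            · exact absurd h' hq1
            · have hmr : ((m+1:ℕ):ℝ) - 1 = (m:ℝ) := by push_cast; ring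
              rw [hmr] at hlt
              have hm2 : (2:ℝ) ≤ (m:ℝ) := by exact_mod_cast (show (2:ℕ) ≤ m by omega)
              have hnr : ((n:ℝ) - 1) = 2*(m:ℝ) := by rw [hm]; push_cast; ring
              rw [hnr, BL.logb_double (show (0:ℝ) < (m:ℝ) by linarith)]
              have hchain : bricklayerLambda n ≤ bricklayerLambda (m+1) + 1 := by
                rw [← hdb]; exact hmono
              linarith
  have hPn : 1 ≤ n → (bricklayerLambda n ≤ Real.logb 2 n ∧
      (bricklayerLambda n = Real.logb 2 n ↔ ∃ d : ℕ, n = 2^d)) := by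
    intro hn
    by_cases hsmall : n ≤ 2^(k+1)
    · exact h1 n hn hsmall
    push_neg at hsmall
    by_cases hpow : ∃ d, n = 2^d
    · obtain ⟨d, rfl⟩ := hpow
      have heq : bricklayerLambda (2^d) = Real.logb 2 ((2^d:ℕ):ℝ) := by
        rw [BL.lam_pow2 h0 d, hlogpow d]
      exact ⟨le_of_eq heq, ⟨fun _ => ⟨d, rfl⟩, fun _ => heq⟩⟩
    · have hstrict : bricklayerLambda n < Real.logb 2 (n:ℝ) := by
        by_cases hpow1 : ∃ d, n = 2^d + 1
        · obtain ⟨d, hd⟩ := hpow1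
          have hd3 : 3 ≤ d := by
            have h2d : 2^(k+1) ≤ 2^d := by omega
            have := hpow_le h2d
            omega
          have hlam := h4 d hd3
          rw [← hd] at hlam
          have hnr : (n:ℝ) = (2:ℝ)^d + 1 := by rw [hd]; push_cast; ring
          have hlt2 : Real.logb 2 ((2:ℝ)^d + 1/2) < Real.logb 2 (n:ℝ) := by
            rw [hnr]
            exact Real.logb_lt_logb (by norm_num) (by positivity) (by norm_num)
          linarith
        · rcases hRn (by omega) with h' | h' | hlt
          · exact absurd h' hpow
          · exact absurd h' hpow1
          · have hnpos : (1:ℝ) < (n:ℝ) := by exact_mod_cast (show 1 < n by omega)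
            have hlt2 : Real.logb 2 ((n:ℝ) - 1) < Real.logb 2 (n:ℝ) :=
              Real.logb_lt_logb (by norm_num) (by linarith) (by linarith)
            linarith
      exact ⟨hstrict.le, ⟨fun h => absurd h hstrict.ne, fun h => absurd h hpow⟩⟩
  exact ⟨hPn, hRn⟩
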